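/- Let G be a countable group acting on a measurable space X such that for every g ∈ G the map x ↦ g·x is measurable, let μ be a probability measure on G, and let ν be a μ-stationary probability measure on X. Suppose E ⊆ X is a measurable subset such that for every g in the subgroup gr(μ) generated by the support of μ, either g·E = E or g·E ∩ E = ∅, and the collection of sets {g·E : g ∈ gr(μ)} is infinite. Then ν(E) = 0. -/

import Mathlib

open MeasureTheory Pointwise
open scoped ENNReal

private lemma tsum_meas_singleton {G : Type*} [Countable G] [MeasurableSpace G]
    [MeasurableSingletonClass G] (μ : Measure G) [IsProbabilityMeasure μ] :
    ∑' g : G, μ {g} = 1 := by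
  rw [← measure_univ (μ := μ), ← Set.iUnion_of_singleton G,
    measure_iUnion (fun i j h => by simp [Function.onFun, h]) fun g => measurableSet_singleton g]

/-- **Maximum principle for stationary measures** (Ballmann, Kaimanovich–Masur, Woess).
Let `G` be a countable group acting measurably on a measurable space `X`, let `μ` be a
probability measure on `G` and `ν` a `μ`-stationary probability measure on `X`. If `E ⊆ X`
is measurable, every element `g` of the subgroup generated by the support of `μ` satisfies
`g • E = E` or `g • E ∩ E = ∅`, and the orbit of `E` under that subgroup is infinite,
then `ν E = 0`. -/
theorem stationary_measure_zero_of_disjoint_translates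
    {G X : Type*} [Group G] [Countable G] [MeasurableSpace G] [DiscreteMeasurableSpace G]
    [MeasurableSpace X] [MulAction G X]
    (hmeas : ∀ g : G, Measurable fun x : X => g • x)
    (μ : Measure G) [IsProbabilityMeasure μ]
    (ν : Measure X) [IsProbabilityMeasure ν]
    (hstat : ∀ A : Set X, MeasurableSet A →
      ν A = ∑' g : G, μ {g} * ν ((fun x => g • x) ⁻¹' A))
    (E : Set X) (hE : MeasurableSet E)
    (halt : ∀ g ∈ Subgroup.closure {g : G | 0 < μ {g}},
      g • E = E ∨ g • E ∩ E = ∅)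
    (hinf : Set.Infinite
      ((fun g : G => g • E) '' (Subgroup.closure {g : G | 0 < μ {g}} : Set G))) :
    ν E = 0 := by
  set H := Subgroup.closure {g : G | 0 < μ {g}} with hH
  set S : Set (Set X) := (fun g : G => g • E) '' (H : Set G) with hS
  -- each element of S is measurable
  have smeas : ∀ (g : G) (A : Set X), MeasurableSet A → MeasurableSet (g • A) := by
    intro g A hA
    have : g • A = (fun x : X => g⁻¹ • x) ⁻¹' A := by
      rw [Set.preimage_smul, inv_inv]
    rw [this]
    exact hmeas g⁻¹ hA
  have Smeas : ∀ A ∈ S, MeasurableSet A := by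
    rintro A ⟨g, _, rfl⟩; exact smeas g E hE
  -- S is invariant under H
  have Sinv : ∀ h ∈ H, ∀ A ∈ S, h • A ∈ S := by
    rintro h hh A ⟨g, hg, rfl⟩
    exact ⟨h * g, mul_mem hh hg, mul_smul h g E⟩
  -- distinct elements of S are disjoint
  have Sdisj : ∀ A ∈ S, ∀ B ∈ S, A ≠ B → A ∩ B = ∅ := by
    rintro A ⟨g, hg, rfl⟩ B ⟨h, hh, rfl⟩ hne
    rcases halt (g⁻¹ * h) (mul_mem (inv_mem hg) hh) with h1 | h2
    · exfalso; apply hne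
      have := congrArg (fun s => g • s) h1
      simpa [← mul_smul] using this.symm
    · have := congrArg (fun s => g • s) h2
      rw [Set.inter_comm]
      simpa [Set.smul_set_inter, ← mul_smul] using this
  -- E itself belongs to S
  have hES : E ∈ S := ⟨1, one_mem H, one_smul G E⟩
  by_contra hne0
  -- the supremum of measures of elements of S
  set m : ℝ≥0∞ := sSup (ν '' S) with hm
  have hmle : m ≤ 1 := by
    apply sSup_le; rintro x ⟨A, _, rfl⟩; exact prob_le_one
  have hmtop : m ≠ ⊤ := (lt_of_le_of_lt hmle ENNReal.one_lt_top).ne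
  have hmpos : 0 < m := lt_of_lt_of_le (pos_iff_ne_zero.mpr hne0)
    (le_sSup ⟨E, hES, rfl⟩)
  -- only finitely many elements of S have measure ≥ ε
  have hfin : ∀ ε : ℝ≥0∞, 0 < ε → {A : S | ε ≤ ν (A : Set X)}.Finite := by
    intro ε hε
    apply Measure.finite_const_le_meas_of_disjoint_iUnion ν hε
      (fun A : S => Smeas A A.2)
    · intro A B hAB
      apply Set.disjoint_iff_inter_eq_empty.mpr
      exact Sdisj A A.2 B B.2 (fun h => hAB (Subtype.ext h))
    · exact (measure_lt_top ν _).ne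
  -- the supremum is attained
  have hatt : ∃ A ∈ S, ν A = m := by
    have hhalf : m / 2 < m := ENNReal.half_lt_self hmpos.ne' hmtop
    have hF0 : {A : S | m / 2 ≤ ν (A : Set X)}.Finite :=
      hfin _ (ENNReal.half_pos hmpos.ne')
    have hex : ∃ A ∈ S, m / 2 < ν A := by
      obtain ⟨x, ⟨A, hA, rfl⟩, hx⟩ := lt_sSup_iff.mp hhalf
      exact ⟨A, hA, hx⟩
    obtain ⟨A₀, hA₀S, hA₀⟩ := hex
    set T : Set ℝ≥0∞ := ν '' {A ∈ S | m / 2 ≤ ν A} with hT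
    have hTfin : T.Finite := by
      apply Set.Finite.image
      have : {A ∈ S | m / 2 ≤ ν A} = Subtype.val '' {A : S | m / 2 ≤ ν (A : Set X)} := by
        ext A; simp [Set.mem_image, Set.mem_setOf_eq]
        tauto
      rw [this]; exact hF0.image _
    have hTne : T.Nonempty := ⟨ν A₀, A₀, ⟨hA₀S, hA₀.le⟩, rfl⟩
    have hmem : sSup T ∈ T := hTne.csSup_mem hTfin
    obtain ⟨A₁, ⟨hA₁S, hA₁half⟩, hA₁⟩ := hmem
    refine ⟨A₁, hA₁S, le_antisymm (le_sSup ⟨A₁, hA₁S, rfl⟩) ?_⟩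
    rw [hA₁, hm]
    apply sSup_le
    rintro x ⟨B, hB, rfl⟩
    rcases le_or_gt (ν B) (m / 2) with h | h
    · exact h.trans (hA₁half.trans (le_sSup ⟨A₁, ⟨hA₁S, hA₁half⟩, rfl⟩))
    · exact le_sSup ⟨B, ⟨hB, h.le⟩, rfl⟩
  -- F : set of elements of S attaining the maximum
  set F : Set (Set X) := {A ∈ S | ν A = m} with hF
  have hFfin : F.Finite := by
    have hsub : F ⊆ Subtype.val '' {A : S | m ≤ ν (A : Set X)} := by
      rintro A ⟨hA, hA2⟩
      exact ⟨⟨A, hA⟩, by simp [hA2], rfl⟩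
    exact ((hfin m hmpos).image _).subset hsub
  obtain ⟨A₁, hA₁S, hA₁m⟩ := hatt
  have hFne : F.Nonempty := ⟨A₁, hA₁S, hA₁m⟩
  -- key step: F is stable under s⁻¹ • for s in the support of μ
  have key : ∀ s : G, 0 < μ {s} → ∀ A ∈ F, s⁻¹ • A ∈ F := by
    rintro s hs A ⟨hAS, hAm⟩
    have hsH : s ∈ H := Subgroup.subset_closure hs
    have hAinS : s⁻¹ • A ∈ S := Sinv s⁻¹ (inv_mem hsH) A hAS
    have hle : ν (s⁻¹ • A) ≤ m := le_sSup ⟨s⁻¹ • A, hAinS, rfl⟩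
    refine ⟨hAinS, ?_⟩
    by_contra hlt'
    have hlt : ν (s⁻¹ • A) < m := lt_of_le_of_ne hle hlt'
    -- stationarity gives a contradiction
    have h1 : ν A = ∑' g : G, μ {g} * ν (g⁻¹ • A) := by
      rw [hstat A (Smeas A hAS)]
      congr 1; ext g; rw [Set.preimage_smul]
    have hterm : ∀ g : G, μ {g} * ν (g⁻¹ • A) ≤ μ {g} * m := by
      intro g
      rcases eq_or_lt_of_le (zero_le : 0 ≤ μ {g}) with h0 | h0
      · rw [← h0]; simp
      · have hmem : g⁻¹ • A ∈ S := Sinv g⁻¹ (inv_mem (Subgroup.subset_closure h0)) A hAS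
        have hle2 : ν (g⁻¹ • A) ≤ m := le_sSup ⟨g⁻¹ • A, hmem, rfl⟩
        exact mul_le_mul_right hle2 _
    have hsum2 : ∑' g : G, μ {g} * m = m := by
      rw [ENNReal.tsum_mul_right, tsum_meas_singleton μ, one_mul]
    have hne : (∑' g : G, μ {g} * ν (g⁻¹ • A)) ≠ ⊤ := by
      rw [← h1, hAm]; exact hmtop
    have : (∑' g : G, μ {g} * ν (g⁻¹ • A)) < ∑' g : G, μ {g} * m :=
      ENNReal.tsum_lt_tsum hne hterm
        ((ENNReal.mul_lt_mul_iff_right hs.ne'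
          (lt_of_le_of_lt (measure_mono (Set.subset_univ _)) (measure_lt_top μ _)).ne).mpr hlt)
    rw [← h1, hAm, hsum2] at this
    exact lt_irrefl m this
  -- the stabilizer of F is a subgroup
  set K : Subgroup G :=
    { carrier := {g : G | ∀ A ∈ F, g • A ∈ F}
      one_mem' := by intro A hA; simpa using hA
      mul_mem' := by
        intro a b ha hb A hA
        rw [mul_smul]; exact ha _ (hb _ hA)
      inv_mem' := by
        intro a ha A hA
        have hmaps : Set.MapsTo (fun B : Set X => a • B) F F := fun B hB => ha B hB
        have hinj : Set.InjOn (fun B : Set X => a • B) F := by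
          intro B _ C _ h
          have := congrArg (fun s => a⁻¹ • s) h
          simpa [inv_smul_smul] using this
        have hbij := (hFfin.injOn_iff_bijOn_of_mapsTo hmaps).mp hinj
        obtain ⟨B, hB, hBA⟩ := hbij.surjOn hA
        have : a⁻¹ • A = B := by
          rw [← hBA]; simp [inv_smul_smul]
        rw [this]; exact hB } with hK
  have hHK : H ≤ K := by
    rw [hH]
    apply Subgroup.closure_le K |>.mpr
    intro s hs
    exact K.inv_mem_iff.mp (key s hs)
  -- every element of S lies in F: contradiction with S infinite
  obtain ⟨g₁, hg₁, hg₁E⟩ := hA₁S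
  have hSF : S ⊆ F := by
    rintro B ⟨g, hg, rfl⟩
    show g • E ∈ F
    have : (g * g₁⁻¹) • A₁ = g • E := by
      rw [← hg₁E, ← mul_smul, mul_assoc, inv_mul_cancel, mul_one]
    rw [← this]
    exact hHK (mul_mem hg (inv_mem hg₁)) A₁ ⟨⟨g₁, hg₁, hg₁E⟩, hA₁m⟩
  exact hinf (hFfin.subset hSF)
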